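/- The graph G_t^k (with the edges inside each X-set removed) is t-degenerate and bipartite. -/

import Mathlib

/-- `G` is `d`-degenerate. -/
def Degenerate {V : Type*} (G : SimpleGraph V) (d : ℕ) : Prop :=
  ∀ A : Set V, A.Finite → A.Nonempty → ∃ a ∈ A, {b ∈ A | G.Adj a b}.ncard ≤ d

/-- Vertices of `G_t`: `Sum.inl i` is `x_i`, `Sum.inr (Sum.inl j)` is `y_j`,
`Sum.inr (Sum.inr ())` is `z`. -/
abbrev GtV (t : ℕ) := Fin t ⊕ (Fin t ⊕ Unit)

/-- Base relation for `G_t` with the clique edges inside `X` removed: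
`X` and `Y` are independent sets, `x_i ~ y_j` iff `i ≠ j`, and `z` is adjacent
exactly to all of `Y`. -/
def GtRelNoClique (t : ℕ) : GtV t → GtV t → Prop
  | .inl i, .inr (.inl j) => i ≠ j
  | .inr (.inl _), .inr (.inr _) => True
  | _, _ => False

/-- Vertices of `G_t^k`: `k` disjoint copies of `G_t` plus a hub vertex `s`. -/
abbrev GtkV (t k : ℕ) := (Fin k × GtV t) ⊕ Unit

/-- Base relation for `G_t^k` with the `X`-clique edges removed: each copy
carries `GtRelNoClique`, and the hub `s` is adjacent to all vertices of every
copy's `X`-set. -/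
def GtkRelNoClique (t k : ℕ) : GtkV t k → GtkV t k → Prop
  | .inl (c, u), .inl (c', u') => c = c' ∧ GtRelNoClique t u u'
  | .inr _, .inl (_, .inl _) => True
  | .inl (_, .inl _), .inr _ => True
  | _, _ => False

/-- The graph `G_t^k` with the edges inside each `X`-set removed. -/
def GtkNoClique (t k : ℕ) : SimpleGraph (GtkV t k) :=
  SimpleGraph.fromRel (GtkRelNoClique t k)

lemma key (t k : ℕ) (a : GtkV t k) (ha : a ≠ Sum.inr ()) :
    ∃ S : Finset (GtkV t k), S.card ≤ t ∧
      ∀ b, (GtkNoClique t k).Adj a b → b ∈ S := by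
  obtain (⟨c, u⟩ | ⟨⟩) := a
  · rcases u with i | j | ⟨⟩
    · -- X vertex
      refine ⟨insert (Sum.inr ())
        ((Finset.univ.erase i).image
          (fun j => (Sum.inl (c, Sum.inr (Sum.inl j)) : GtkV t k))), ?_, ?_⟩
      · have h1 : (Finset.univ.erase i).card < t := by
          simpa using Finset.card_erase_lt_of_mem (Finset.mem_univ i)
        calc _ ≤ _ + 1 := Finset.card_insert_le _ _
          _ ≤ (Finset.univ.erase i).card + 1 :=
              Nat.add_le_add_right Finset.card_image_le 1
          _ ≤ t := h1
      · rintro b hb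
        rw [GtkNoClique, SimpleGraph.fromRel_adj] at hb
        obtain ⟨hne, h | h⟩ := hb
        · rcases b with ⟨c', v⟩ | ⟨⟩
          · rcases v with i' | j' | ⟨⟩
            · exact absurd h.2 not_false
            · obtain ⟨rfl, h2⟩ := h
              have h3 : i ≠ j' := h2
              exact Finset.mem_insert_of_mem
                (Finset.mem_image.2 ⟨j', by simp [Ne.symm h3], rfl⟩)
            · exact absurd h.2 not_false
          · simp
        · rcases b with ⟨c', v⟩ | ⟨⟩
          · rcases v with i' | j' | ⟨⟩ <;> simp [GtkRelNoClique, GtRelNoClique] at h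
          · simp
    · -- Y vertex
      refine ⟨insert (Sum.inl (c, Sum.inr (Sum.inr ())))
        ((Finset.univ.erase j).image
          (fun i => (Sum.inl (c, Sum.inl i) : GtkV t k))), ?_, ?_⟩
      · have h1 : (Finset.univ.erase j).card < t := by
          simpa using Finset.card_erase_lt_of_mem (Finset.mem_univ j)
        calc _ ≤ _ + 1 := Finset.card_insert_le _ _
          _ ≤ (Finset.univ.erase j).card + 1 :=
              Nat.add_le_add_right Finset.card_image_le 1
          _ ≤ t := h1
      · rintro b hb
        rw [GtkNoClique, SimpleGraph.fromRel_adj] at hb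
        obtain ⟨hne, h | h⟩ := hb
        · rcases b with ⟨c', v⟩ | ⟨⟩
          · rcases v with i' | j' | ⟨⟩
            · exact absurd h.2 not_false
            · exact absurd h.2 not_false
            · obtain ⟨rfl, -⟩ := h
              simp
          · simp [GtkRelNoClique] at h
        · rcases b with ⟨c', v⟩ | ⟨⟩
          · rcases v with i' | j' | ⟨⟩
            · obtain ⟨rfl, h2⟩ := h
              have h3 : i' ≠ j := h2
              exact Finset.mem_insert_of_mem
                (Finset.mem_image.2 ⟨i', by simp [h3], rfl⟩)
            · exact absurd h.2 not_false
            · exact absurd h.2 not_false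
          · simp [GtkRelNoClique] at h
    · -- z vertex
      refine ⟨Finset.univ.image
          (fun j => (Sum.inl (c, Sum.inr (Sum.inl j)) : GtkV t k)), ?_, ?_⟩
      · calc _ ≤ (Finset.univ : Finset (Fin t)).card := Finset.card_image_le
          _ = t := by simp
      · rintro b hb
        rw [GtkNoClique, SimpleGraph.fromRel_adj] at hb
        obtain ⟨hne, h | h⟩ := hb
        · rcases b with ⟨c', v⟩ | ⟨⟩
          · rcases v with i' | j' | ⟨⟩ <;> simp [GtkRelNoClique, GtRelNoClique] at h
          · simp [GtkRelNoClique] at h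
        · rcases b with ⟨c', v⟩ | ⟨⟩
          · rcases v with i' | j' | ⟨⟩
            · exact absurd h.2 not_false
            · obtain ⟨rfl, -⟩ := h
              simp
            · exact absurd h.2 not_false
          · simp [GtkRelNoClique] at h
  · exact absurd rfl ha

theorem stmt16 (t k : ℕ) :
    Degenerate (GtkNoClique t k) t ∧ (GtkNoClique t k).Colorable 2 := by
  constructor
  · intro A hAfin hAne
    by_cases hs : ∃ a ∈ A, a ≠ Sum.inr ()
    · obtain ⟨a, haA, hane⟩ := hs
      obtain ⟨S, hScard, hS⟩ := key t k a hane
      refine ⟨a, haA, ?_⟩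
      calc {b ∈ A | (GtkNoClique t k).Adj a b}.ncard
          ≤ (S : Set (GtkV t k)).ncard := by
            apply Set.ncard_le_ncard
            · rintro b ⟨-, hb⟩
              exact hS b hb
            · exact S.finite_toSet
        _ = S.card := by simp
        _ ≤ t := hScard
    · push_neg at hs
      obtain ⟨a, haA⟩ := hAne
      refine ⟨a, haA, ?_⟩
      have : {b ∈ A | (GtkNoClique t k).Adj a b} = ∅ := by
        ext b
        simp only [Set.mem_setOf_eq, Set.mem_empty_iff_false, iff_false, not_and]
        intro hbA hadj
        have h1 := hs a haA
        have h2 := hs b hbA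
        subst h1 h2
        exact (GtkNoClique t k).loopless.irrefl _ hadj
      rw [this]
      simp
  · refine ⟨SimpleGraph.Coloring.mk
      (fun v => match v with
        | .inl (_, .inl _) => 0
        | .inl (_, .inr (.inl _)) => 1
        | .inl (_, .inr (.inr _)) => 0
        | .inr _ => 1) ?_⟩
    intro v w hvw
    rw [GtkNoClique, SimpleGraph.fromRel_adj] at hvw
    obtain ⟨-, h | h⟩ := hvw <;>
    · rcases v with ⟨c, (i|j|⟨⟩)⟩ | ⟨⟩ <;> rcases w with ⟨c', (i'|j'|⟨⟩)⟩ | ⟨⟩ <;>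
        simp_all [GtkRelNoClique, GtRelNoClique]
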